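/- Let φ: ℝ^d → ℝ be a C^2 function and h: ℝ^d → ℂ a compactly supported C^1 function such that ∑_{j=1}^d (∂_j φ(w))^2 ≠ 0 for all w in the support of h. Define h_k^φ(w) = i·∂_k φ(w)·h(w) / ∑_{j=1}^d (∂_j φ(w))^2 for k = 1, …, d. Then ∫_{ℝ^d} e^{iφ(w)}·h(w) dw = ∫_{ℝ^d} e^{iφ(w)}·∑_{k=1}^d ∂_k h_k^φ(w) dw. -/

import Mathlib

open MeasureTheory Filter Set
open scoped ENNReal Topology

noncomputable section

abbrev Euc (d : ℕ) := EuclideanSpace ℝ (Fin d)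

/-- the partial derivative ∂_k of a function on ℝ^d. -/
def pderivK {d : ℕ} {F : Type*} [NormedAddCommGroup F] [NormedSpace ℝ F]
    (k : Fin d) (f : Euc d → F) (w : Euc d) : F :=
  fderiv ℝ f w (EuclideanSpace.single k 1)

lemma integral_pderiv_eq_zero {d : ℕ} (G : Euc d → ℂ) (hG : ContDiff ℝ 1 G)
    (hGc : HasCompactSupport G) (v : Euc d) :
    ∫ w : Euc d, fderiv ℝ G w v = 0 := by
  have hGd : Differentiable ℝ G := hG.differentiable one_ne_zero
  have hcont : Continuous fun x => fderiv ℝ G x v :=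
    (hG.continuous_fderiv one_ne_zero).clm_apply continuous_const
  have hsupp : HasCompactSupport fun x => fderiv ℝ G x v := hGc.fderiv_apply ℝ v
  have hint : Integrable (fun x => fderiv ℝ G x v) := hcont.integrable_of_hasCompactSupport hsupp
  have key := integral_mul_fderiv_eq_neg_fderiv_mul_of_integrable
    (μ := (volume : Measure (Euc d))) (f := fun _ : Euc d => (1:ℂ)) (g := G) (v := v)
    (by simpa using (integrable_zero (Euc d) ℂ volume))
    (by simpa using hint)
    (by simpa using hG.continuous.integrable_of_hasCompactSupport hGc)
    (fun x _ => differentiableAt_const _) (fun x _ => hGd x)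
  simpa using key

/-- integration by parts for oscillatory integrals: with
h_k^φ(w) = i·∂_k φ(w)·h(w) / ∑_j (∂_j φ(w))², one has
∫ e^{iφ(w)} h(w) dw = ∫ e^{iφ(w)} ∑_k ∂_k h_k^φ(w) dw. -/
theorem oscillatory_integration_by_parts
    (d : ℕ) (φ : Euc d → ℝ) (h : Euc d → ℂ)
    (hφ : ContDiff ℝ 2 φ) (hh : ContDiff ℝ 1 h) (hhc : HasCompactSupport h)
    (hnz : ∀ w ∈ tsupport h, ∑ j : Fin d, (pderivK j φ w) ^ 2 ≠ 0) :
    ∫ w : Euc d, Complex.exp (Complex.I * φ w) * h w =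
      ∫ w : Euc d, Complex.exp (Complex.I * φ w) *
        ∑ k : Fin d,
          pderivK k (fun w' : Euc d =>
            Complex.I * Complex.ofReal (pderivK k φ w') * h w' /
              Complex.ofReal (∑ j : Fin d, (pderivK j φ w')^2)) w := by
  classical
  set g : Fin d → Euc d → ℂ := fun k w' =>
    Complex.I * Complex.ofReal (pderivK k φ w') * h w' /
      Complex.ofReal (∑ j : Fin d, (pderivK j φ w') ^ 2) with hg_def
  set E : Euc d → ℂ := fun w => Complex.exp (Complex.I * φ w) with hE_def
  -- ψ k is C¹
  have hψ : ∀ k : Fin d, ContDiff ℝ 1 (fun w => pderivK k φ w) := by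
    intro k
    have : ContDiff ℝ 1 (fderiv ℝ φ) := hφ.fderiv_right (by norm_num)
    exact this.clm_apply contDiff_const
  have hScd : ContDiff ℝ 1 (fun w => ∑ j : Fin d, (pderivK j φ w) ^ 2) := by
    apply ContDiff.sum
    intro j _
    exact (hψ j).pow 2
  -- h vanishes off tsupport h, hence so does g
  have hg0 : ∀ k : Fin d, ∀ x, x ∉ tsupport h → g k x = 0 := by
    intro k x hx
    have : h x = 0 := image_eq_zero_of_notMem_tsupport hx
    simp [hg_def, this]
  have hgev : ∀ k : Fin d, ∀ x, x ∉ tsupport h → g k =ᶠ[𝓝 x] 0 := by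
    intro k x hx
    have hopen : IsOpen (tsupport h)ᶜ := (isClosed_tsupport h).isOpen_compl
    filter_upwards [hopen.mem_nhds hx] with y hy using hg0 k y hy
  -- g k is C¹
  have hgcd : ∀ k : Fin d, ContDiff ℝ 1 (g k) := by
    intro k
    rw [contDiff_iff_contDiffAt]
    intro x
    by_cases hx : x ∈ tsupport h
    · have hSx : (∑ j : Fin d, (pderivK j φ x) ^ 2) ≠ 0 := hnz x hx
      have h1 : ContDiffAt ℝ 1 (fun w => Complex.I * Complex.ofReal (pderivK k φ w) * h w) x :=
        ((contDiffAt_const.mul ((Complex.ofRealCLM.contDiff.comp (hψ k)).contDiffAt)).mul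
          hh.contDiffAt)
      have h2' : ContDiffAt ℝ 1 (fun w => (∑ j : Fin d, (pderivK j φ w) ^ 2)⁻¹) x :=
        hScd.contDiffAt.inv hSx
      have h2 : ContDiffAt ℝ 1
          (fun w => Complex.ofReal ((∑ j : Fin d, (pderivK j φ w) ^ 2)⁻¹)) x :=
        Complex.ofRealCLM.contDiff.contDiffAt.comp x h2'
      have h3 : ContDiffAt ℝ 1 (fun w => Complex.I * Complex.ofReal (pderivK k φ w) * h w *
          Complex.ofReal ((∑ j : Fin d, (pderivK j φ w) ^ 2)⁻¹)) x := h1.mul h2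
      apply h3.congr_of_eventuallyEq
      apply Filter.Eventually.of_forall
      intro y
      simp only [hg_def]
      rw [div_eq_mul_inv, Complex.ofReal_inv]
    · exact (contDiffAt_const (c := (0:ℂ))).congr_of_eventuallyEq (hgev k x hx)
  have hgc : ∀ k : Fin d, HasCompactSupport (g k) := fun k =>
    HasCompactSupport.intro hhc (hg0 k)
  -- E is C¹
  have hEcd : ContDiff ℝ 1 E := by
    have h1 : ContDiff ℝ 1 (fun w => Complex.I * Complex.ofReal (φ w)) :=
      contDiff_const.mul (Complex.ofRealCLM.contDiff.comp (hφ.of_le one_le_two))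
    exact (Complex.contDiff_exp.of_le le_top).comp h1
  -- derivative of E
  have hEderiv : ∀ w, HasFDerivAt E
      (Complex.exp (Complex.I * φ w) •
        (Complex.I • (Complex.ofRealCLM.comp (fderiv ℝ φ w)))) w := by
    intro w
    have hφw : HasFDerivAt φ (fderiv ℝ φ w) w :=
      ((hφ.differentiable two_ne_zero) w).hasFDerivAt
    have h1 : HasFDerivAt (fun w => (Complex.ofReal (φ w)))
        (Complex.ofRealCLM.comp (fderiv ℝ φ w)) w :=
      Complex.ofRealCLM.hasFDerivAt.comp w hφw
    have h2 : HasFDerivAt (fun w => Complex.I * Complex.ofReal (φ w))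
        (Complex.I • (Complex.ofRealCLM.comp (fderiv ℝ φ w))) w := h1.const_mul Complex.I
    exact (Complex.hasDerivAt_exp (Complex.I * φ w)).comp_hasFDerivAt w h2
  have hpE : ∀ k : Fin d, ∀ w, pderivK k E w = E w * (Complex.I * pderivK k φ w) := by
    intro k w
    rw [pderivK, (hEderiv w).fderiv]
    simp [hE_def, pderivK, mul_comm]
  -- F k := E * g k
  set F : Fin d → Euc d → ℂ := fun k w => E w * g k w with hF_def
  have hFcd : ∀ k, ContDiff ℝ 1 (F k) := fun k => hEcd.mul (hgcd k)
  have hFc : ∀ k, HasCompactSupport (F k) := fun k =>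
    HasCompactSupport.intro hhc (fun x hx => by simp [hF_def, hg0 k x hx])
  -- product rule pointwise
  have hprod : ∀ k : Fin d, ∀ w, pderivK k (F k) w =
      E w * pderivK k (g k) w + g k w * (E w * (Complex.I * pderivK k φ w)) := by
    intro k w
    have hdE : DifferentiableAt ℝ E w := hEcd.differentiable one_ne_zero w
    have hdg : DifferentiableAt ℝ (g k) w := (hgcd k).differentiable one_ne_zero w
    rw [hF_def]
    have := fderiv_fun_mul (𝕜 := ℝ) hdE hdg
    rw [pderivK, this]
    simp only [ContinuousLinearMap.add_apply, ContinuousLinearMap.smul_apply, smul_eq_mul]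
    rw [← hpE k w]
    ring_nf
    rfl
  -- each ∫ pderivK k (F k) = 0
  have hzero : ∀ k : Fin d, ∫ w : Euc d, pderivK k (F k) w = 0 := by
    intro k
    exact integral_pderiv_eq_zero (F k) (hFcd k) (hFc k) _
  -- pointwise algebraic identity
  have halg : ∀ w, ∑ k : Fin d, g k w * (E w * (Complex.I * pderivK k φ w)) =
      - (E w * h w) := by
    intro w
    by_cases hw : w ∈ tsupport h
    · have hSw : (Complex.ofReal (∑ j : Fin d, (pderivK j φ w) ^ 2)) ≠ 0 :=
        Complex.ofReal_ne_zero.mpr (hnz w hw)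
      have hsum : (∑ k : Fin d, (Complex.ofReal (pderivK k φ w)) ^ 2) =
          Complex.ofReal (∑ j : Fin d, (pderivK j φ w) ^ 2) := by
        push_cast
        ring
      calc ∑ k : Fin d, g k w * (E w * (Complex.I * pderivK k φ w))
          = ∑ k : Fin d, E w * h w * Complex.I ^ 2 *
              ((Complex.ofReal (pderivK k φ w)) ^ 2 /
                Complex.ofReal (∑ j : Fin d, (pderivK j φ w) ^ 2)) := by
            refine Finset.sum_congr rfl fun k _ => ?_
            simp only [hg_def]
            ring
        _ = E w * h w * Complex.I ^ 2 *
              ∑ k : Fin d, ((Complex.ofReal (pderivK k φ w)) ^ 2 /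
                Complex.ofReal (∑ j : Fin d, (pderivK j φ w) ^ 2)) := by
            rw [Finset.mul_sum]
        _ = E w * h w * Complex.I ^ 2 := by
            rw [← Finset.sum_div, hsum, div_self hSw, mul_one]
        _ = - (E w * h w) := by rw [Complex.I_sq]; ring
    · have hhw : h w = 0 := image_eq_zero_of_notMem_tsupport hw
      rw [Finset.sum_eq_zero fun k _ => by rw [hg0 k w hw]; ring, hhw]
      ring
  -- continuity and support facts for integrability
  have hpdcont : ∀ k : Fin d, Continuous (fun w => pderivK k (g k) w) := fun k =>
    ((hgcd k).continuous_fderiv one_ne_zero).clm_apply continuous_const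
  have hpd0 : ∀ k : Fin d, ∀ x, x ∉ tsupport h → pderivK k (g k) x = 0 := by
    intro k x hx
    have hf : fderiv ℝ (g k) x = 0 := by
      rw [(hgev k x hx).fderiv_eq]
      exact fderiv_const_apply 0
    rw [pderivK, hf]
    rfl
  have hintB : Integrable (fun w : Euc d => E w * h w) := by
    apply Continuous.integrable_of_hasCompactSupport
    · exact hEcd.continuous.mul hh.continuous
    · exact HasCompactSupport.intro hhc fun x hx => by
        simp [image_eq_zero_of_notMem_tsupport hx]
  have hintA : Integrable (fun w : Euc d => E w * ∑ k : Fin d, pderivK k (g k) w) := by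
    apply Continuous.integrable_of_hasCompactSupport
    · exact hEcd.continuous.mul (continuous_finset_sum _ fun k _ => hpdcont k)
    · exact HasCompactSupport.intro hhc fun x hx => by
        simp [Finset.sum_eq_zero fun k (_ : k ∈ Finset.univ) => hpd0 k x hx]
  -- main computation
  have hmain : (0:ℂ) = (∫ w : Euc d, E w * ∑ k : Fin d, pderivK k (g k) w) -
      ∫ w : Euc d, E w * h w := by
    calc (0:ℂ) = ∑ k : Fin d, ∫ w : Euc d, pderivK k (F k) w := by
          simp [hzero]
      _ = ∫ w : Euc d, ∑ k : Fin d, pderivK k (F k) w := by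
          rw [← integral_finset_sum]
          intro k _
          apply Continuous.integrable_of_hasCompactSupport
          · exact ((hFcd k).continuous_fderiv one_ne_zero).clm_apply continuous_const
          · exact (hFc k).fderiv_apply ℝ _
      _ = ∫ w : Euc d, (E w * ∑ k : Fin d, pderivK k (g k) w - E w * h w) := by
          congr 1
          ext w
          rw [Finset.sum_congr rfl fun k _ => hprod k w]
          rw [Finset.sum_add_distrib, halg w, Finset.mul_sum]
          ring
      _ = (∫ w : Euc d, E w * ∑ k : Fin d, pderivK k (g k) w) -
          ∫ w : Euc d, E w * h w := integral_sub hintA hintB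
  have := sub_eq_zero.mp hmain.symm
  exact this.symm

end
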